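/- arXiv:2305.11726 — 2 statements merged into one kernel-verified Lean document; each statement's English description precedes it below -/
import Mathlib

section
/- For the geometric covering intervals I_k = {[i·2^k, (i+1)·2^k - 1] : i ∈ N} (k ≥ 0), any interval [s, s+τ-1] ⊆ [1, T] of natural numbers can be partitioned into two finite sequences of disjoint consecutive intervals I_{-p}, ..., I_0 and I_1, ..., I_q, each belonging to ∪_k I_k, such that |I_{-i}|/|I_{-i+1}| ≤ 1/2 for all i ≥ 1 and |I_i|/|I_{i-1}| ≤ 1/2 for all i ≥ 2. -/
/-- blocks going rightward from `a`, covering `[a, a+n-1]`, peeling top binary digit. -/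
def rblocks (a n : ℕ) : List (ℕ × ℕ) :=
  if h : n = 0 then []
  else (a, 2 ^ Nat.log 2 n) :: rblocks (a + 2 ^ Nat.log 2 n) (n - 2 ^ Nat.log 2 n)
  termination_by n
  decreasing_by exact Nat.sub_lt (Nat.pos_of_ne_zero h) (Nat.pow_pos (by norm_num))

/-- blocks going leftward from exclusive right end `a`, covering `[a-n, a-1]`. -/
def lblocks (a n : ℕ) : List (ℕ × ℕ) :=
  if h : n = 0 then []
  else (a - 2 ^ Nat.log 2 n, 2 ^ Nat.log 2 n) ::
    lblocks (a - 2 ^ Nat.log 2 n) (n - 2 ^ Nat.log 2 n)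
  termination_by n
  decreasing_by exact Nat.sub_lt (Nat.pos_of_ne_zero h) (Nat.pow_pos (by norm_num))

lemma rblocks_zero (a : ℕ) : rblocks a 0 = [] := by rw [rblocks]; simp

lemma rblocks_succ (a n : ℕ) (h : n ≠ 0) :
    rblocks a n = (a, 2 ^ Nat.log 2 n) ::
      rblocks (a + 2 ^ Nat.log 2 n) (n - 2 ^ Nat.log 2 n) := by
  rw [rblocks]; simp [h]

lemma lblocks_zero (a : ℕ) : lblocks a 0 = [] := by rw [lblocks]; simp

lemma lblocks_succ (a n : ℕ) (h : n ≠ 0) :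
    lblocks a n = (a - 2 ^ Nat.log 2 n, 2 ^ Nat.log 2 n) ::
      lblocks (a - 2 ^ Nat.log 2 n) (n - 2 ^ Nat.log 2 n) := by
  rw [lblocks]; simp [h]

lemma pow_log_le (n : ℕ) (h : n ≠ 0) : 2 ^ Nat.log 2 n ≤ n :=
  Nat.pow_log_le_self 2 h

lemma lt_two_pow_log (n : ℕ) : n < 2 * 2 ^ Nat.log 2 n := by
  rcases eq_or_ne n 0 with rfl | h
  · positivity
  · have := Nat.lt_pow_succ_log_self (b := 2) (by norm_num) n
    rwa [pow_succ, mul_comm] at this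

lemma rblocks_cover (n : ℕ) : ∀ a x : ℕ,
    ((∃ b ∈ rblocks a n, b.1 ≤ x ∧ x < b.1 + b.2) ↔ a ≤ x ∧ x < a + n) := by
  induction n using Nat.strong_induction_on with
  | _ n IH =>
    intro a x
    rcases eq_or_ne n 0 with rfl | h
    · simp [rblocks_zero]
    · rw [rblocks_succ a n h]
      set B := 2 ^ Nat.log 2 n with hB
      have h1 : B ≤ n := pow_log_le n h
      have h2 : 0 < B := Nat.pow_pos (by norm_num)
      have := IH (n - B) (Nat.sub_lt (Nat.pos_of_ne_zero h) h2) (a + B) x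
      constructor
      · rintro ⟨b, hb, hx1, hx2⟩
        rcases List.mem_cons.mp hb with rfl | hb
        · exact ⟨hx1, by omega⟩
        · have := this.mp ⟨b, hb, hx1, hx2⟩; omega
      · rintro ⟨hx1, hx2⟩
        by_cases hc : x < a + B
        · exact ⟨(a, B), List.mem_cons_self, hx1, hc⟩
        · obtain ⟨b, hb, hh⟩ := this.mpr (by omega)
          exact ⟨b, List.mem_cons_of_mem _ hb, hh⟩

lemma lblocks_cover (n : ℕ) : ∀ a x : ℕ, n ≤ a →
    ((∃ b ∈ lblocks a n, b.1 ≤ x ∧ x < b.1 + b.2) ↔ a - n ≤ x ∧ x < a) := by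
  induction n using Nat.strong_induction_on with
  | _ n IH =>
    intro a x hna
    rcases eq_or_ne n 0 with rfl | h
    · simp [lblocks_zero]
    · rw [lblocks_succ a n h]
      set B := 2 ^ Nat.log 2 n with hB
      have h1 : B ≤ n := pow_log_le n h
      have h2 : 0 < B := Nat.pow_pos (by norm_num)
      have := IH (n - B) (Nat.sub_lt (Nat.pos_of_ne_zero h) h2) (a - B) x (by omega)
      constructor
      · rintro ⟨b, hb, hx1, hx2⟩
        rcases List.mem_cons.mp hb with rfl | hb
        · simp only at hx1 hx2; omega
        · have := this.mp ⟨b, hb, hx1, hx2⟩; omega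
      · rintro ⟨hx1, hx2⟩
        by_cases hc : a - B ≤ x
        · exact ⟨(a - B, B), List.mem_cons_self, hc, by omega⟩
        · obtain ⟨b, hb, hh⟩ := this.mpr (by omega)
          exact ⟨b, List.mem_cons_of_mem _ hb, hh⟩

lemma rblocks_mem (n : ℕ) : ∀ a : ℕ, 2 ^ Nat.log 2 n ∣ a →
    ∀ b ∈ rblocks a n, (∃ k, b.2 = 2 ^ k ∧ 2 ^ k ∣ b.1) ∧ a ≤ b.1 ∧ b.1 + b.2 ≤ a + n := by
  induction n using Nat.strong_induction_on with
  | _ n IH =>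
    intro a hdvd b hb
    rcases eq_or_ne n 0 with rfl | h
    · simp [rblocks_zero] at hb
    · rw [rblocks_succ a n h] at hb
      set B := 2 ^ Nat.log 2 n with hB
      have h1 : B ≤ n := pow_log_le n h
      have h2 : 0 < B := Nat.pow_pos (by norm_num)
      have hdvd' : 2 ^ Nat.log 2 (n - B) ∣ a + B := by
        have hlog : Nat.log 2 (n - B) ≤ Nat.log 2 n := Nat.log_mono_right (by omega)
        exact dvd_add (dvd_trans (pow_dvd_pow 2 hlog) hdvd)
          (pow_dvd_pow 2 hlog)
      rcases List.mem_cons.mp hb with rfl | hb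
      · exact ⟨⟨Nat.log 2 n, rfl, hdvd⟩, le_refl _, by omega⟩
      · have := IH (n - B) (Nat.sub_lt (Nat.pos_of_ne_zero h) h2) (a + B) hdvd' b hb
        exact ⟨this.1, by omega, by omega⟩

lemma lblocks_mem (n : ℕ) : ∀ a : ℕ, 2 ^ Nat.log 2 n ∣ a → n ≤ a →
    ∀ b ∈ lblocks a n, (∃ k, b.2 = 2 ^ k ∧ 2 ^ k ∣ b.1) ∧ a - n ≤ b.1 ∧ b.1 + b.2 ≤ a := by
  induction n using Nat.strong_induction_on with
  | _ n IH =>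
    intro a hdvd hna b hb
    rcases eq_or_ne n 0 with rfl | h
    · simp [lblocks_zero] at hb
    · rw [lblocks_succ a n h] at hb
      set B := 2 ^ Nat.log 2 n with hB
      have h1 : B ≤ n := pow_log_le n h
      have h2 : 0 < B := Nat.pow_pos (by norm_num)
      have hdvd' : 2 ^ Nat.log 2 (n - B) ∣ a - B := by
        have hlog : Nat.log 2 (n - B) ≤ Nat.log 2 n := Nat.log_mono_right (by omega)
        exact (Nat.dvd_sub (dvd_trans (pow_dvd_pow 2 hlog) hdvd)
          (pow_dvd_pow 2 hlog))
      rcases List.mem_cons.mp hb with rfl | hb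
      · refine ⟨⟨Nat.log 2 n, rfl, Nat.dvd_sub hdvd dvd_rfl⟩, by omega, by omega⟩
      · have := IH (n - B) (Nat.sub_lt (Nat.pos_of_ne_zero h) h2) (a - B) hdvd' (by omega) b hb
        refine ⟨this.1, by omega, by omega⟩

lemma rblocks_lb (n : ℕ) : ∀ a : ℕ, ∀ b ∈ rblocks a n, a ≤ b.1 := by
  induction n using Nat.strong_induction_on with
  | _ n IH =>
    intro a b hb
    rcases eq_or_ne n 0 with rfl | h
    · simp [rblocks_zero] at hb
    · rw [rblocks_succ a n h] at hb
      set B := 2 ^ Nat.log 2 n with hB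
      rcases List.mem_cons.mp hb with rfl | hb
      · exact le_refl _
      · have h2 : 0 < B := Nat.pow_pos (by norm_num)
        have := IH (n - B) (Nat.sub_lt (Nat.pos_of_ne_zero h) h2) (a + B) b hb
        omega

lemma lblocks_ub (n : ℕ) : ∀ a : ℕ, n ≤ a → ∀ b ∈ lblocks a n, b.1 + b.2 ≤ a := by
  induction n using Nat.strong_induction_on with
  | _ n IH =>
    intro a hna b hb
    rcases eq_or_ne n 0 with rfl | h
    · simp [lblocks_zero] at hb
    · rw [lblocks_succ a n h] at hb
      set B := 2 ^ Nat.log 2 n with hB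
      have h1 : B ≤ n := pow_log_le n h
      have h2 : 0 < B := Nat.pow_pos (by norm_num)
      rcases List.mem_cons.mp hb with rfl | hb
      · simp only; omega
      · have := IH (n - B) (Nat.sub_lt (Nat.pos_of_ne_zero h) h2) (a - B) (by omega) b hb
        omega

lemma rblocks_length_pos (a n : ℕ) (h : n ≠ 0) : 0 < (rblocks a n).length := by
  rw [rblocks_succ a n h]; simp

lemma lblocks_length_pos (a n : ℕ) (h : n ≠ 0) : 0 < (lblocks a n).length := by
  rw [lblocks_succ a n h]; simp

lemma rblocks_head (a n : ℕ) (h : n ≠ 0) :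
    (rblocks a n)[0]'(rblocks_length_pos a n h) = (a, 2 ^ Nat.log 2 n) := by
  simp [rblocks_succ a n h]

lemma lblocks_head (a n : ℕ) (h : n ≠ 0) :
    (lblocks a n)[0]'(lblocks_length_pos a n h) = (a - 2 ^ Nat.log 2 n, 2 ^ Nat.log 2 n) := by
  simp [lblocks_succ a n h]

lemma rblocks_order (n : ℕ) : ∀ a t u : ℕ, ∀ (htu : t < u) (hu : u < (rblocks a n).length),
    ((rblocks a n)[t]'(lt_trans htu hu)).1 + ((rblocks a n)[t]'(lt_trans htu hu)).2
      ≤ ((rblocks a n)[u]'hu).1 := by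
  induction n using Nat.strong_induction_on with
  | _ n IH =>
    intro a t u htu hu
    rcases eq_or_ne n 0 with rfl | h
    · rw [rblocks_zero] at hu; simp at hu
    · have hrec := rblocks_succ a n h
      set B := 2 ^ Nat.log 2 n with hB
      have h2 : 0 < B := Nat.pow_pos (by norm_num)
      have hlen : (rblocks a n).length = (rblocks (a + B) (n - B)).length + 1 := by
        rw [hrec]; simp
      rcases Nat.eq_zero_or_pos t with rfl | ht
      · obtain ⟨u', rfl⟩ : ∃ u', u = u' + 1 := ⟨u - 1, by omega⟩
        have hu' : u' < (rblocks (a + B) (n - B)).length := by omega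
        have hmem : (rblocks a n)[u' + 1]'hu ∈ rblocks (a + B) (n - B) := by
          have : (rblocks a n)[u' + 1]'hu = (rblocks (a + B) (n - B))[u']'hu' := by
            simp only [hrec]; rfl
          rw [this]; exact List.getElem_mem _
        have := rblocks_lb (n - B) (a + B) _ hmem
        have hh : (rblocks a n)[0]'(by omega) = (a, B) := rblocks_head a n h
        rw [hh]; simpa using this
      · obtain ⟨t', rfl⟩ : ∃ t', t = t' + 1 := ⟨t - 1, by omega⟩
        obtain ⟨u', rfl⟩ : ∃ u', u = u' + 1 := ⟨u - 1, by omega⟩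
        have hu' : u' < (rblocks (a + B) (n - B)).length := by omega
        have e1 : (rblocks a n)[t' + 1]'(by omega) = (rblocks (a + B) (n - B))[t']'(by omega) := by
          simp only [hrec]; rfl
        have e2 : (rblocks a n)[u' + 1]'hu = (rblocks (a + B) (n - B))[u']'hu' := by
          simp only [hrec]; rfl
        rw [e1, e2]
        exact IH (n - B) (Nat.sub_lt (Nat.pos_of_ne_zero h) h2) (a + B) t' u' (by omega) hu'

lemma lblocks_order (n : ℕ) : ∀ a t u : ℕ, n ≤ a → ∀ (htu : t < u) (hu : u < (lblocks a n).length),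
    ((lblocks a n)[u]'hu).1 + ((lblocks a n)[u]'hu).2
      ≤ ((lblocks a n)[t]'(lt_trans htu hu)).1 := by
  induction n using Nat.strong_induction_on with
  | _ n IH =>
    intro a t u hna htu hu
    rcases eq_or_ne n 0 with rfl | h
    · rw [lblocks_zero] at hu; simp at hu
    · have hrec := lblocks_succ a n h
      set B := 2 ^ Nat.log 2 n with hB
      have h1 : B ≤ n := pow_log_le n h
      have h2 : 0 < B := Nat.pow_pos (by norm_num)
      have hlen : (lblocks a n).length = (lblocks (a - B) (n - B)).length + 1 := by
        rw [hrec]; simp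
      rcases Nat.eq_zero_or_pos t with rfl | ht
      · obtain ⟨u', rfl⟩ : ∃ u', u = u' + 1 := ⟨u - 1, by omega⟩
        have hu' : u' < (lblocks (a - B) (n - B)).length := by omega
        have hmem : (lblocks a n)[u' + 1]'hu ∈ lblocks (a - B) (n - B) := by
          have : (lblocks a n)[u' + 1]'hu = (lblocks (a - B) (n - B))[u']'hu' := by
            simp only [hrec]; rfl
          rw [this]; exact List.getElem_mem _
        have := lblocks_ub (n - B) (a - B) (by omega) _ hmem
        have hh : (lblocks a n)[0]'(by omega) = (a - B, B) := lblocks_head a n h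
        rw [hh]; simpa using this
      · obtain ⟨t', rfl⟩ : ∃ t', t = t' + 1 := ⟨t - 1, by omega⟩
        obtain ⟨u', rfl⟩ : ∃ u', u = u' + 1 := ⟨u - 1, by omega⟩
        have hu' : u' < (lblocks (a - B) (n - B)).length := by omega
        have e1 : (lblocks a n)[t' + 1]'(by omega) = (lblocks (a - B) (n - B))[t']'(by omega) := by
          simp only [hrec]; rfl
        have e2 : (lblocks a n)[u' + 1]'hu = (lblocks (a - B) (n - B))[u']'hu' := by
          simp only [hrec]; rfl
        rw [e1, e2]
        exact IH (n - B) (Nat.sub_lt (Nat.pos_of_ne_zero h) h2) (a - B) t' u' (by omega) (by omega) hu'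

lemma rblocks_tail_getElem (a n : ℕ) (h : n ≠ 0) (t : ℕ)
    (ht : t + 1 < (rblocks a n).length) :
    (rblocks a n)[t + 1]'ht =
      (rblocks (a + 2 ^ Nat.log 2 n) (n - 2 ^ Nat.log 2 n))[t]'(by
        have := rblocks_succ a n h
        have : (rblocks a n).length
            = (rblocks (a + 2 ^ Nat.log 2 n) (n - 2 ^ Nat.log 2 n)).length + 1 := by
          rw [this]; simp
        omega) := by
  simp only [rblocks_succ a n h]; rfl

lemma lblocks_tail_getElem (a n : ℕ) (h : n ≠ 0) (t : ℕ)
    (ht : t + 1 < (lblocks a n).length) :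
    (lblocks a n)[t + 1]'ht =
      (lblocks (a - 2 ^ Nat.log 2 n) (n - 2 ^ Nat.log 2 n))[t]'(by
        have : (lblocks a n).length
            = (lblocks (a - 2 ^ Nat.log 2 n) (n - 2 ^ Nat.log 2 n)).length + 1 := by
          rw [lblocks_succ a n h]; simp
        omega) := by
  simp only [lblocks_succ a n h]; rfl

lemma rblocks_len_ne (a n : ℕ) (h : n ≠ 0) :
    (rblocks a n).length = (rblocks (a + 2 ^ Nat.log 2 n) (n - 2 ^ Nat.log 2 n)).length + 1 := by
  rw [rblocks_succ a n h]; simp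

lemma lblocks_len_ne (a n : ℕ) (h : n ≠ 0) :
    (lblocks a n).length = (lblocks (a - 2 ^ Nat.log 2 n) (n - 2 ^ Nat.log 2 n)).length + 1 := by
  rw [lblocks_succ a n h]; simp

lemma rblocks_consec (n : ℕ) : ∀ a t : ℕ, ∀ (ht : t + 1 < (rblocks a n).length),
    ((rblocks a n)[t + 1]'ht).1
      = ((rblocks a n)[t]'(by omega)).1 + ((rblocks a n)[t]'(by omega)).2 := by
  induction n using Nat.strong_induction_on with
  | _ n IH =>
    intro a t ht
    rcases eq_or_ne n 0 with rfl | h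
    · rw [rblocks_zero] at ht; simp at ht
    · set B := 2 ^ Nat.log 2 n with hB
      have h1 : B ≤ n := pow_log_le n h
      have h2 : 0 < B := Nat.pow_pos (by norm_num)
      have hlen := rblocks_len_ne a n h
      rw [← hB] at hlen
      rcases Nat.eq_zero_or_pos t with rfl | htp
      · have h' : n - B ≠ 0 := by
          intro hz
          rw [hlen, hz, rblocks_zero] at ht; simp at ht
        rw [rblocks_tail_getElem a n h 0 ht, rblocks_head (a + B) (n - B) h',
          rblocks_head a n h]
      · obtain ⟨t', rfl⟩ : ∃ t', t = t' + 1 := ⟨t - 1, by omega⟩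
        rw [rblocks_tail_getElem a n h (t' + 1) ht, rblocks_tail_getElem a n h t' (by omega)]
        exact IH (n - B) (Nat.sub_lt (Nat.pos_of_ne_zero h) h2) (a + B) t' (by omega)

lemma lblocks_consec (n : ℕ) : ∀ a t : ℕ, n ≤ a → ∀ (ht : t + 1 < (lblocks a n).length),
    ((lblocks a n)[t + 1]'ht).1 + ((lblocks a n)[t + 1]'ht).2
      = ((lblocks a n)[t]'(by omega)).1 := by
  induction n using Nat.strong_induction_on with
  | _ n IH =>
    intro a t hna ht
    rcases eq_or_ne n 0 with rfl | h
    · rw [lblocks_zero] at ht; simp at ht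
    · set B := 2 ^ Nat.log 2 n with hB
      have h1 : B ≤ n := pow_log_le n h
      have h2 : 0 < B := Nat.pow_pos (by norm_num)
      have hlen := lblocks_len_ne a n h
      rw [← hB] at hlen
      rcases Nat.eq_zero_or_pos t with rfl | htp
      · have h' : n - B ≠ 0 := by
          intro hz
          rw [hlen, hz, lblocks_zero] at ht; simp at ht
        rw [lblocks_tail_getElem a n h 0 ht, lblocks_head (a - B) (n - B) h',
          lblocks_head a n h]
        have hB' : 2 ^ Nat.log 2 (n - B) ≤ n - B := pow_log_le _ h'
        simp only
        omega
      · obtain ⟨t', rfl⟩ : ∃ t', t = t' + 1 := ⟨t - 1, by omega⟩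
        rw [lblocks_tail_getElem a n h (t' + 1) ht, lblocks_tail_getElem a n h t' (by omega)]
        exact IH (n - B) (Nat.sub_lt (Nat.pos_of_ne_zero h) h2) (a - B) t' (by omega) (by omega)

lemma log_succ_le (x y : ℕ) (hx : x ≠ 0) (hxy : x < 2 ^ y) : Nat.log 2 x + 1 ≤ y := by
  have := Nat.pow_log_le_self 2 hx
  by_contra hc
  push_neg at hc
  have : 2 ^ y ≤ 2 ^ Nat.log 2 x := Nat.pow_le_pow_right (by norm_num) (by omega)
  omega

lemma rblocks_halve (n : ℕ) : ∀ a t : ℕ, ∀ (ht : t + 1 < (rblocks a n).length),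
    2 * ((rblocks a n)[t + 1]'ht).2 ≤ ((rblocks a n)[t]'(by omega)).2 := by
  induction n using Nat.strong_induction_on with
  | _ n IH =>
    intro a t ht
    rcases eq_or_ne n 0 with rfl | h
    · rw [rblocks_zero] at ht; simp at ht
    · set B := 2 ^ Nat.log 2 n with hB
      have h1 : B ≤ n := pow_log_le n h
      have h2 : 0 < B := Nat.pow_pos (by norm_num)
      have hlen := rblocks_len_ne a n h
      rw [← hB] at hlen
      rcases Nat.eq_zero_or_pos t with rfl | htp
      · have h' : n - B ≠ 0 := by
          intro hz
          rw [hlen, hz, rblocks_zero] at ht; simp at ht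
        rw [rblocks_tail_getElem a n h 0 ht, rblocks_head (a + B) (n - B) h',
          rblocks_head a n h]
        simp only
        have hlt : n - B < B := by
          have := lt_two_pow_log n; omega
        have := log_succ_le (n - B) (Nat.log 2 n) h' (by rw [← hB]; exact hlt)
        calc 2 * 2 ^ Nat.log 2 (n - B) = 2 ^ (Nat.log 2 (n - B) + 1) := by ring
          _ ≤ 2 ^ Nat.log 2 n := Nat.pow_le_pow_right (by norm_num) this
      · obtain ⟨t', rfl⟩ : ∃ t', t = t' + 1 := ⟨t - 1, by omega⟩
        rw [rblocks_tail_getElem a n h (t' + 1) ht, rblocks_tail_getElem a n h t' (by omega)]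
        exact IH (n - B) (Nat.sub_lt (Nat.pos_of_ne_zero h) h2) (a + B) t' (by omega)

lemma lblocks_halve (n : ℕ) : ∀ a t : ℕ, ∀ (ht : t + 1 < (lblocks a n).length),
    2 * ((lblocks a n)[t + 1]'ht).2 ≤ ((lblocks a n)[t]'(by omega)).2 := by
  induction n using Nat.strong_induction_on with
  | _ n IH =>
    intro a t ht
    rcases eq_or_ne n 0 with rfl | h
    · rw [lblocks_zero] at ht; simp at ht
    · set B := 2 ^ Nat.log 2 n with hB
      have h1 : B ≤ n := pow_log_le n h
      have h2 : 0 < B := Nat.pow_pos (by norm_num)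
      have hlen := lblocks_len_ne a n h
      rw [← hB] at hlen
      rcases Nat.eq_zero_or_pos t with rfl | htp
      · have h' : n - B ≠ 0 := by
          intro hz
          rw [hlen, hz, lblocks_zero] at ht; simp at ht
        rw [lblocks_tail_getElem a n h 0 ht, lblocks_head (a - B) (n - B) h',
          lblocks_head a n h]
        simp only
        have hlt : n - B < B := by
          have := lt_two_pow_log n; omega
        have := log_succ_le (n - B) (Nat.log 2 n) h' (by rw [← hB]; exact hlt)
        calc 2 * 2 ^ Nat.log 2 (n - B) = 2 ^ (Nat.log 2 (n - B) + 1) := by ring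
          _ ≤ 2 ^ Nat.log 2 n := Nat.pow_le_pow_right (by norm_num) this
      · obtain ⟨t', rfl⟩ : ∃ t', t = t' + 1 := ⟨t - 1, by omega⟩
        rw [lblocks_tail_getElem a n h (t' + 1) ht, lblocks_tail_getElem a n h t' (by omega)]
        exact IH (n - B) (Nat.sub_lt (Nat.pos_of_ne_zero h) h2) (a - B) t' (by omega)
def GCIntervals : Set (Finset ℕ) :=
  {A | ∃ k i : ℕ, A = Finset.Icc (i * 2 ^ k) ((i + 1) * 2 ^ k - 1)}

/-- The finset interval associated to a (start, length) pair. -/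
def ofB (b : ℕ × ℕ) : Finset ℕ := Finset.Icc b.1 (b.1 + b.2 - 1)

lemma mem_ofB (b : ℕ × ℕ) (x : ℕ) (h : 0 < b.2) : x ∈ ofB b ↔ b.1 ≤ x ∧ x < b.1 + b.2 := by
  rw [ofB, Finset.mem_Icc]; omega

lemma ofB_nonempty (b : ℕ × ℕ) (h : 0 < b.2) : (ofB b).Nonempty :=
  ⟨b.1, (mem_ofB b b.1 h).mpr (by omega)⟩

lemma card_ofB (b : ℕ × ℕ) (h : 0 < b.2) : (ofB b).card = b.2 := by
  rw [ofB, Nat.card_Icc]; omega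

lemma min'_ofB (b : ℕ × ℕ) (h : 0 < b.2) (hne : (ofB b).Nonempty) :
    (ofB b).min' hne = b.1 := by
  apply le_antisymm
  · exact Finset.min'_le _ _ ((mem_ofB b b.1 h).mpr (by omega))
  · exact Finset.le_min' _ _ _ fun x hx => ((mem_ofB b x h).mp hx).1

lemma max'_ofB (b : ℕ × ℕ) (h : 0 < b.2) (hne : (ofB b).Nonempty) :
    (ofB b).max' hne = b.1 + b.2 - 1 := by
  apply le_antisymm
  · exact Finset.max'_le _ _ _ fun x hx => by have := ((mem_ofB b x h).mp hx).2; omega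
  · exact Finset.le_max' _ _ ((mem_ofB b _ h).mpr (by omega))

lemma ofB_GC (b : ℕ × ℕ) (h : ∃ k, b.2 = 2 ^ k ∧ 2 ^ k ∣ b.1) : ofB b ∈ GCIntervals := by
  obtain ⟨k, h2, i, hi⟩ := h
  refine ⟨k, i, ?_⟩
  have h3 : (i + 1) * 2 ^ k = i * 2 ^ k + 2 ^ k := by ring
  have h4 : b.1 = i * 2 ^ k := by rw [hi]; ring
  rw [ofB, h4, h2, h3]

lemma min'_congr (A B : Finset ℕ) (h : A = B) (hA : A.Nonempty) :
    A.min' hA = B.min' (h ▸ hA) := by subst h; rfl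

lemma max'_congr (A B : Finset ℕ) (h : A = B) (hA : A.Nonempty) :
    A.max' hA = B.max' (h ▸ hA) := by subst h; rfl

lemma getElem_idx_congr {α : Type*} (l : List α) (t u : ℕ) (h : t = u) (ht : t < l.length) :
    l[t]'ht = l[u]'(h ▸ ht) := by subst h; rfl
/-- Geometric covering lemma: any interval `[s, s+τ-1] ⊆ [1, T]` can be partitioned into
two sequences of disjoint consecutive geometric covering intervals `I_{-p}, …, I_0` and
`I_1, …, I_q` whose lengths decay by factors of at least `1/2`. -/
theorem geometric_covering_lemma (T s τ : ℕ) (hs : 1 ≤ s) (hτ : 1 ≤ τ)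
    (hT : s + τ - 1 ≤ T) :
    ∃ (p q : ℕ) (J : ℤ → Finset ℕ),
      -- the pieces partition [s, s+τ-1]
      (Finset.Icc (-(p : ℤ)) q).biUnion (fun i => J i) = Finset.Icc s (s + τ - 1) ∧
      (∀ i ∈ Finset.Icc (-(p : ℤ)) (q : ℤ), ∀ j ∈ Finset.Icc (-(p : ℤ)) (q : ℤ),
        i ≠ j → Disjoint (J i) (J j)) ∧
      -- each piece is a nonempty geometric covering interval
      (∀ i ∈ Finset.Icc (-(p : ℤ)) (q : ℤ), J i ∈ GCIntervals ∧ (J i).Nonempty) ∧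
      -- the pieces are consecutive
      (∀ i ∈ Finset.Icc (-(p : ℤ)) ((q : ℤ) - 1), ∀ (h : (J i).Nonempty)
        (h' : (J (i + 1)).Nonempty), (J (i + 1)).min' h' = (J i).max' h + 1) ∧
      -- lengths of the backward sequence halve
      (∀ i : ℤ, 1 ≤ i → -i ≥ -(p : ℤ) → 2 * (J (-i)).card ≤ (J (-i + 1)).card) ∧
      -- lengths of the forward sequence halve
      (∀ i : ℤ, 2 ≤ i → i ≤ (q : ℤ) → 2 * (J i).card ≤ (J (i - 1)).card) := by
  classical
  -- the maximal scale m
  set C : ℕ → Prop := fun k => ((s - 1) / 2 ^ k + 2) * 2 ^ k ≤ s + τ with hCdef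
  have hCdec : DecidablePred C := fun k => by rw [hCdef]; infer_instance
  set m := Nat.findGreatest C τ with hmdef
  have hC0 : C 0 := by rw [hCdef]; simp; omega
  have hCm : C m := Nat.findGreatest_spec (Nat.zero_le τ) hC0
  set L := ((s - 1) / 2 ^ m + 1) * 2 ^ m with hLdef
  set R := L + 2 ^ m with hRdef
  have hm2 : 0 < 2 ^ m := Nat.pow_pos (by norm_num)
  have hdivle : (s - 1) / 2 ^ m * 2 ^ m ≤ s - 1 := Nat.div_mul_le_self _ _
  have hdivlt : s - 1 < (s - 1) / 2 ^ m * 2 ^ m + 2 ^ m := by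
    have h1 := Nat.div_add_mod (s - 1) (2 ^ m)
    have h2 : (s - 1) % 2 ^ m < 2 ^ m := Nat.mod_lt _ hm2
    have h3 : 2 ^ m * ((s - 1) / 2 ^ m) = (s - 1) / 2 ^ m * 2 ^ m := mul_comm _ _
    omega
  have hLalt : L = (s - 1) / 2 ^ m * 2 ^ m + 2 ^ m := by rw [hLdef]; ring
  have hsL : s ≤ L := by omega
  have hLs : L < s + 2 ^ m := by omega
  have hRe : R ≤ s + τ := by
    have : ((s - 1) / 2 ^ m + 2) * 2 ^ m = L + 2 ^ m := by rw [hLdef]; ring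
    rw [hCdef] at hCm; omega
  set d := L - s with hddef
  set r := s + τ - R with hrdef
  have hdlt : d < 2 ^ m := by omega
  have hdvdL : 2 ^ m ∣ L := ⟨(s - 1) / 2 ^ m + 1, by rw [hLdef]; ring⟩
  have hdvdR : 2 ^ m ∣ R := dvd_add hdvdL dvd_rfl
  -- r < 2^(m+1)
  have hrlt : r < 2 * 2 ^ m := by
    by_contra hc
    push_neg at hc
    have hwit : ∃ i : ℕ, s ≤ i * 2 ^ (m + 1) ∧ (i + 1) * 2 ^ (m + 1) ≤ s + τ := by
      rcases Nat.even_or_odd ((s - 1) / 2 ^ m + 1) with ⟨c, hcc⟩ | ⟨c, hcc⟩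
      · refine ⟨c, ?_, ?_⟩
        · have h1 : c * 2 ^ (m + 1) = (c + c) * 2 ^ m := by rw [pow_succ]; ring
          rw [h1, ← hcc, ← hLdef]; exact hsL
        · have h1 : (c + 1) * 2 ^ (m + 1) = (c + c) * 2 ^ m + 2 * 2 ^ m := by
            rw [pow_succ]; ring
          rw [h1, ← hcc, ← hLdef]
          omega
      · refine ⟨c + 1, ?_, ?_⟩
        · have h1 : (c + 1) * 2 ^ (m + 1) = (2 * c + 1) * 2 ^ m + 2 ^ m := by
            rw [pow_succ]; ring
          rw [h1, ← hcc, ← hLdef]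
          omega
        · have h1 : (c + 1 + 1) * 2 ^ (m + 1) = ((2 * c + 1) * 2 ^ m + 2 ^ m) + 2 * 2 ^ m := by
            rw [pow_succ]; ring
          rw [h1, ← hcc, ← hLdef]
          omega
    obtain ⟨i, hi1, hi2⟩ := hwit
    have hCm1 : C (m + 1) := by
      rw [hCdef]
      have hpos : 0 < 2 ^ (m + 1) := Nat.pow_pos (by norm_num)
      have hlt : (s - 1) / 2 ^ (m + 1) < i := by
        rw [Nat.div_lt_iff_lt_mul hpos]
        have : 0 < i * 2 ^ (m + 1) := by omega
        omega
      calc ((s - 1) / 2 ^ (m + 1) + 2) * 2 ^ (m + 1) ≤ (i + 1) * 2 ^ (m + 1) :=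
            Nat.mul_le_mul_right _ (by omega)
        _ ≤ s + τ := hi2
    have hmτ : m + 1 ≤ τ := by
      have h1 : 2 ^ (m + 1) ≤ r := by rw [pow_succ]; omega
      have h2 : r ≤ τ := by omega
      have h3 : m + 1 < 2 ^ (m + 1) := Nat.lt_two_pow_self
      omega
    exact Nat.findGreatest_is_greatest (by omega) hmτ hCm1
  have hsd : s + d = L := by omega
  have hRr : R + r = s + τ := by omega
  have hdL : d ≤ L := by omega
  have hlogd : 2 ^ Nat.log 2 d ∣ L := by
    rcases eq_or_ne d 0 with hd0 | hd0
    · rw [hd0]; simpa using (dvd_trans (pow_dvd_pow 2 (Nat.zero_le m)) hdvdL)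
    · have := log_succ_le d m hd0 hdlt
      exact dvd_trans (pow_dvd_pow 2 (by omega)) hdvdL
  have hlogr : 2 ^ Nat.log 2 r ∣ R := by
    rcases eq_or_ne r 0 with hr0 | hr0
    · rw [hr0]; simpa using (dvd_trans (pow_dvd_pow 2 (Nat.zero_le m)) hdvdR)
    · have := log_succ_le r (m + 1) hr0 (by rw [pow_succ]; omega)
      exact dvd_trans (pow_dvd_pow 2 (by omega : Nat.log 2 r ≤ m)) hdvdR
  set p := (lblocks L d).length with hpdef
  set q := (rblocks R r).length with hqdef
  set J : ℤ → Finset ℕ := fun i =>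
    if i = 0 then ofB (L, 2 ^ m)
    else if 0 < i then ofB ((rblocks R r).getD (i.toNat - 1) (0, 1))
    else ofB ((lblocks L d).getD ((-i).toNat - 1) (0, 1)) with hJdef
  have hJ0 : J 0 = ofB (L, 2 ^ m) := by simp only [hJdef]; norm_num
  have hJpos : ∀ i : ℤ, 1 ≤ i → ∀ (h : i.toNat - 1 < (rblocks R r).length),
      J i = ofB ((rblocks R r)[i.toNat - 1]'h) := by
    intro i hi h
    simp only [hJdef, if_neg (by omega : ¬ i = 0), if_pos (by omega : (0:ℤ) < i)]
    rw [List.getD_eq_getElem _ _ h]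
  have hJneg : ∀ i : ℤ, i ≤ -1 → ∀ (h : (-i).toNat - 1 < (lblocks L d).length),
      J i = ofB ((lblocks L d)[(-i).toNat - 1]'h) := by
    intro i hi h
    simp only [hJdef, if_neg (by omega : ¬ i = 0), if_neg (by omega : ¬ (0:ℤ) < i)]
    rw [List.getD_eq_getElem _ _ h]
  have hrfacts : ∀ t (h : t < (rblocks R r).length),
      (∃ k, ((rblocks R r)[t]'h).2 = 2 ^ k ∧ 2 ^ k ∣ ((rblocks R r)[t]'h).1) ∧
        R ≤ ((rblocks R r)[t]'h).1 ∧
        ((rblocks R r)[t]'h).1 + ((rblocks R r)[t]'h).2 ≤ R + r :=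
    fun t h => rblocks_mem r R hlogr _ (List.getElem_mem h)
  have hlfacts : ∀ t (h : t < (lblocks L d).length),
      (∃ k, ((lblocks L d)[t]'h).2 = 2 ^ k ∧ 2 ^ k ∣ ((lblocks L d)[t]'h).1) ∧
        L - d ≤ ((lblocks L d)[t]'h).1 ∧
        ((lblocks L d)[t]'h).1 + ((lblocks L d)[t]'h).2 ≤ L :=
    fun t h => lblocks_mem d L hlogd hdL _ (List.getElem_mem h)
  have hrpos : ∀ t (h : t < (rblocks R r).length), 0 < ((rblocks R r)[t]'h).2 := by
    intro t h
    obtain ⟨⟨k, hk, _⟩, _⟩ := hrfacts t h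
    rw [hk]; positivity
  have hlpos : ∀ t (h : t < (lblocks L d).length), 0 < ((lblocks L d)[t]'h).2 := by
    intro t h
    obtain ⟨⟨k, hk, _⟩, _⟩ := hlfacts t h
    rw [hk]; positivity
  have hd0p : ∀ i : ℤ, -(p:ℤ) ≤ i → i ≤ -1 → d ≠ 0 := by
    intro i h1 h2 hd0
    have hp0 : p = 0 := by rw [hpdef, hd0, lblocks_zero]; rfl
    omega
  have hr0q : 1 ≤ q → r ≠ 0 := by
    intro h1 hr0
    have hq0 : q = 0 := by rw [hqdef, hr0, rblocks_zero]; rfl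
    omega
  refine ⟨p, q, J, ?_, ?_, ?_, ?_, ?_, ?_⟩
  · -- biUnion
    ext x
    simp only [Finset.mem_biUnion, Finset.mem_Icc]
    constructor
    · rintro ⟨i, hi, hx⟩
      rcases lt_trichotomy i 0 with hi0 | hi0 | hi0
      · have ht : (-i).toNat - 1 < (lblocks L d).length := by omega
        rw [hJneg i (by omega) ht] at hx
        rw [mem_ofB _ _ (hlpos _ ht)] at hx
        have := hlfacts _ ht
        omega
      · rw [hi0, hJ0, mem_ofB _ _ hm2] at hx
        replace hx : L ≤ x ∧ x < L + 2 ^ m := hx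
        omega
      · have ht : i.toNat - 1 < (rblocks R r).length := by omega
        rw [hJpos i (by omega) ht] at hx
        rw [mem_ofB _ _ (hrpos _ ht)] at hx
        have := hrfacts _ ht
        omega
    · rintro ⟨hx1, hx2⟩
      by_cases hxL : x < L
      · -- left part
        obtain ⟨b, hb, hbx⟩ := (lblocks_cover d L x hdL).mpr (by omega)
        obtain ⟨t, ht, rfl⟩ := List.mem_iff_getElem.mp hb
        refine ⟨-(t + 1 : ℕ), ⟨by omega, by omega⟩, ?_⟩
        have hlt : (-(-(t + 1 : ℕ) : ℤ)).toNat - 1 < (lblocks L d).length := by omega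
        rw [hJneg _ (by omega) hlt, mem_ofB _ _ (hlpos _ hlt)]
        have htn : (-(-(t + 1 : ℕ) : ℤ)).toNat - 1 = t := by omega
        rw [getElem_idx_congr _ _ _ htn]
        exact hbx
      by_cases hxR : x < R
      · refine ⟨0, ⟨by omega, by omega⟩, ?_⟩
        rw [hJ0, mem_ofB _ _ hm2]
        exact show L ≤ x ∧ x < L + 2 ^ m by omega
      · obtain ⟨b, hb, hbx⟩ := (rblocks_cover r R x).mpr (by omega)
        obtain ⟨t, ht, rfl⟩ := List.mem_iff_getElem.mp hb
        refine ⟨(t + 1 : ℕ), ⟨by omega, by omega⟩, ?_⟩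
        have hlt : (((t + 1 : ℕ) : ℤ)).toNat - 1 < (rblocks R r).length := by omega
        rw [hJpos _ (by omega) hlt, mem_ofB _ _ (hrpos _ hlt)]
        have htn : (((t + 1 : ℕ) : ℤ)).toNat - 1 = t := by omega
        rw [getElem_idx_congr _ _ _ htn]
        exact hbx
  · -- disjointness
    have key : ∀ i j : ℤ, -(p:ℤ) ≤ i → i < j → j ≤ (q:ℤ) →
        ∀ x ∈ J i, ∀ y ∈ J j, x < y := by
      intro i j hip hij hjq x hx y hy
      rcases lt_trichotomy i 0 with hi0 | hi0 | hi0
      · have hti : (-i).toNat - 1 < (lblocks L d).length := by omega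
        rw [hJneg i (by omega) hti, mem_ofB _ _ (hlpos _ hti)] at hx
        rcases lt_trichotomy j 0 with hj0 | hj0 | hj0
        · have htj : (-j).toNat - 1 < (lblocks L d).length := by omega
          rw [hJneg j (by omega) htj, mem_ofB _ _ (hlpos _ htj)] at hy
          have hord := lblocks_order d L ((-j).toNat - 1) ((-i).toNat - 1) hdL (by omega) hti
          omega
        · rw [hj0, hJ0, mem_ofB _ _ hm2] at hy
          have := (hlfacts _ hti).2.2
          replace hy : L ≤ y ∧ y < L + 2 ^ m := hy
          omega
        · have htj : j.toNat - 1 < (rblocks R r).length := by omega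
          rw [hJpos j (by omega) htj, mem_ofB _ _ (hrpos _ htj)] at hy
          have h1 := (hlfacts _ hti).2.2
          have h2 := (hrfacts _ htj).2.1
          omega
      · rw [hi0, hJ0, mem_ofB _ _ hm2] at hx
        have hj1 : 1 ≤ j := by omega
        have htj : j.toNat - 1 < (rblocks R r).length := by omega
        rw [hJpos j hj1 htj, mem_ofB _ _ (hrpos _ htj)] at hy
        have h2 := (hrfacts _ htj).2.1
        replace hx : L ≤ x ∧ x < L + 2 ^ m := hx
        omega
      · have hti : i.toNat - 1 < (rblocks R r).length := by omega
        have htj : j.toNat - 1 < (rblocks R r).length := by omega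
        rw [hJpos i (by omega) hti, mem_ofB _ _ (hrpos _ hti)] at hx
        rw [hJpos j (by omega) htj, mem_ofB _ _ (hrpos _ htj)] at hy
        have hord := rblocks_order r R (i.toNat - 1) (j.toNat - 1) (by omega) htj
        omega
    intro i hi j hj hne
    rw [Finset.mem_Icc] at hi hj
    rw [Finset.disjoint_left]
    intro x hxi hxj
    rcases lt_or_gt_of_ne hne with h | h
    · exact absurd (key i j hi.1 h hj.2 x hxi x hxj) (lt_irrefl x)
    · exact absurd (key j i hj.1 h hi.2 x hxj x hxi) (lt_irrefl x)
  · -- GC and nonempty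
    intro i hi
    rw [Finset.mem_Icc] at hi
    rcases lt_trichotomy i 0 with hi0 | hi0 | hi0
    · have hti : (-i).toNat - 1 < (lblocks L d).length := by omega
      rw [hJneg i (by omega) hti]
      exact ⟨ofB_GC _ (hlfacts _ hti).1, ofB_nonempty _ (hlpos _ hti)⟩
    · rw [hi0, hJ0]
      exact ⟨ofB_GC _ ⟨m, rfl, hdvdL⟩, ofB_nonempty _ hm2⟩
    · have hti : i.toNat - 1 < (rblocks R r).length := by omega
      rw [hJpos i (by omega) hti]
      exact ⟨ofB_GC _ (hrfacts _ hti).1, ofB_nonempty _ (hrpos _ hti)⟩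
  · -- consecutive
    intro i hi h h'
    rw [Finset.mem_Icc] at hi
    rcases lt_trichotomy i (-1) with hi0 | hi0 | hi0
    · -- i ≤ -2, both on the left
      have hti : (-i).toNat - 1 < (lblocks L d).length := by omega
      have htj : (-(i+1)).toNat - 1 < (lblocks L d).length := by omega
      have e1 : J i = ofB ((lblocks L d)[(-i).toNat - 1]'hti) := hJneg i (by omega) hti
      have e2 : J (i+1) = ofB ((lblocks L d)[(-(i+1)).toNat - 1]'htj) := hJneg (i+1) (by omega) htj
      rw [min'_congr _ _ e2 h', max'_congr _ _ e1 h,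
        min'_ofB _ (hlpos _ htj), max'_ofB _ (hlpos _ hti)]
      have hcons := lblocks_consec d L ((-(i+1)).toNat - 1) hdL (by omega)
      have hp1 := hlpos _ hti
      have heq : (lblocks L d)[(-i).toNat - 1]'hti
          = (lblocks L d)[((-(i+1)).toNat - 1) + 1]'(by omega) :=
        getElem_idx_congr _ _ _ (by omega) hti
      rw [heq] at hp1 ⊢
      omega
    · -- i = -1
      subst hi0
      have hd0 : d ≠ 0 := hd0p (-1) (by omega) (by omega)
      have hlen : 0 < (lblocks L d).length := lblocks_length_pos L d hd0
      have hti : (-(-1:ℤ)).toNat - 1 < (lblocks L d).length := by omega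
      have e1 : J (-1) = ofB ((lblocks L d)[(-(-1:ℤ)).toNat - 1]'hti) := hJneg (-1) (by omega) hti
      have e2 : J (-1 + 1) = ofB (L, 2 ^ m) := by rw [show ((-1:ℤ) + 1) = 0 by omega, hJ0]
      rw [min'_congr _ _ e2 h', max'_congr _ _ e1 h,
        min'_ofB _ hm2, max'_ofB _ (hlpos _ hti)]
      have hhead : (lblocks L d)[(-(-1:ℤ)).toNat - 1]'hti
          = (L - 2 ^ Nat.log 2 d, 2 ^ Nat.log 2 d) := by
        rw [getElem_idx_congr _ _ 0 (by omega) hti]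
        exact lblocks_head L d hd0
      rw [hhead]
      have hld : 2 ^ Nat.log 2 d ≤ d := pow_log_le d hd0
      show L = L - 2 ^ Nat.log 2 d + 2 ^ Nat.log 2 d - 1 + 1
      omega
    · rcases lt_trichotomy i 0 with h2 | h2 | h2
      · omega
      · -- i = 0
        subst h2
        have hq1 : 1 ≤ q := by omega
        have hr0 : r ≠ 0 := hr0q hq1
        have hlen : 0 < (rblocks R r).length := rblocks_length_pos R r hr0
        have hti : ((0:ℤ) + 1).toNat - 1 < (rblocks R r).length := by omega
        have e1 : J 0 = ofB (L, 2 ^ m) := hJ0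
        have e2 : J (0 + 1) = ofB ((rblocks R r)[((0:ℤ) + 1).toNat - 1]'hti) :=
          hJpos (0 + 1) (by omega) hti
        rw [min'_congr _ _ e2 h', max'_congr _ _ e1 h,
          min'_ofB _ (hrpos _ hti), max'_ofB _ hm2]
        have hhead : (rblocks R r)[((0:ℤ) + 1).toNat - 1]'hti = (R, 2 ^ Nat.log 2 r) := by
          rw [getElem_idx_congr _ _ 0 (by omega) hti]
          exact rblocks_head R r hr0
        rw [hhead]
        show R = L + 2 ^ m - 1 + 1
        omega
      · -- i ≥ 1, both on the right
        have hti : i.toNat - 1 < (rblocks R r).length := by omega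
        have htj : (i+1).toNat - 1 < (rblocks R r).length := by omega
        have e1 : J i = ofB ((rblocks R r)[i.toNat - 1]'hti) := hJpos i (by omega) hti
        have e2 : J (i+1) = ofB ((rblocks R r)[(i+1).toNat - 1]'htj) := hJpos (i+1) (by omega) htj
        rw [min'_congr _ _ e2 h', max'_congr _ _ e1 h,
          min'_ofB _ (hrpos _ htj), max'_ofB _ (hrpos _ hti)]
        have hcons := rblocks_consec r R (i.toNat - 1) (by omega)
        have hp1 := hrpos _ hti
        have heq : (rblocks R r)[(i+1).toNat - 1]'htj
            = (rblocks R r)[(i.toNat - 1) + 1]'(by omega) :=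
          getElem_idx_congr _ _ _ (by omega) htj
        rw [heq]
        omega
  · -- backward halving
    intro i h1 h2
    have hd0 : d ≠ 0 := hd0p (-i) (by omega) (by omega)
    have hlen : 0 < (lblocks L d).length := lblocks_length_pos L d hd0
    rcases eq_or_lt_of_le h1 with h1' | h1'
    · -- i = 1
      rw [← h1']
      have hti : (-(-1:ℤ)).toNat - 1 < (lblocks L d).length := by omega
      have h01 : ((-1:ℤ) + 1) = 0 := by omega
      rw [show (-(1:ℤ)) = -1 by omega, hJneg (-1) (by omega) hti,
        show (-(1:ℤ) + 1) = 0 by omega, hJ0]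
      rw [card_ofB _ (hlpos _ hti), card_ofB _ hm2]
      have hhead : (lblocks L d)[(-(-1:ℤ)).toNat - 1]'hti
          = (L - 2 ^ Nat.log 2 d, 2 ^ Nat.log 2 d) := by
        rw [getElem_idx_congr _ _ 0 (by omega) hti]
        exact lblocks_head L d hd0
      rw [hhead]
      show 2 * 2 ^ Nat.log 2 d ≤ 2 ^ m
      have := log_succ_le d m hd0 hdlt
      calc 2 * 2 ^ Nat.log 2 d = 2 ^ (Nat.log 2 d + 1) := by ring
        _ ≤ 2 ^ m := Nat.pow_le_pow_right (by norm_num) this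
    · -- i ≥ 2
      have hti : (-(-i:ℤ)).toNat - 1 < (lblocks L d).length := by omega
      have htj : (-(-i+1:ℤ)).toNat - 1 < (lblocks L d).length := by omega
      rw [hJneg (-i) (by omega) hti, hJneg (-i+1) (by omega) htj]
      rw [card_ofB _ (hlpos _ hti), card_ofB _ (hlpos _ htj)]
      have hhalve := lblocks_halve d L ((-(-i+1:ℤ)).toNat - 1) (by omega)
      have heq : (lblocks L d)[(-(-i:ℤ)).toNat - 1]'hti
          = (lblocks L d)[((-(-i+1:ℤ)).toNat - 1) + 1]'(by omega) :=
        getElem_idx_congr _ _ _ (by omega) hti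
      rw [heq]
      exact hhalve
  · -- forward halving
    intro i h1 h2
    have hti : i.toNat - 1 < (rblocks R r).length := by omega
    have htj : (i-1).toNat - 1 < (rblocks R r).length := by omega
    rw [hJpos i (by omega) hti, hJpos (i-1) (by omega) htj]
    rw [card_ofB _ (hrpos _ hti), card_ofB _ (hrpos _ htj)]
    have hhalve := rblocks_halve r R ((i-1).toNat - 1) (by omega)
    have heq : (rblocks R r)[i.toNat - 1]'hti
        = (rblocks R r)[((i-1).toNat - 1) + 1]'(by omega) :=
      getElem_idx_congr _ _ _ (by omega) hti
    rw [heq]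
    exact hhalve
end

section
/- Suppose for every interval J in the geometric covering the algorithm's regret over J satisfies Regret(J) ≤ a·|J|^{1/2} + b·|J|^{3/4} for constants a, b ≥ 0. Then for any interval I = [s, s+τ-1] ⊆ [T], the regret over I satisfies Regret(I) ≤ 8a·τ^{1/2} + 6b·τ^{3/4}. -/
open Real Finset

/- ---------------- analytic lemmas ---------------- -/

private lemma key_concave {p : ℝ} (hp : 0 < p) (hp1 : p ≤ 1) {K x τ : ℝ} (hx : 0 ≤ x)
    (hK : 1 ≤ K) (hxτ : x ≤ τ) (hτK : τ ≤ K * x) :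
    (K ^ p - (K - 1) ^ p) * x ^ p ≤ τ ^ p - (τ - x) ^ p := by
  rcases eq_or_lt_of_le hx with rfl | hxpos
  · have hτ0 : τ = 0 := le_antisymm (by linarith) hxτ
    simp [hτ0, Real.zero_rpow hp.ne']
  · set d : ℝ := K * x - τ with hd
    have hd0 : 0 ≤ d := by linarith
    have hdx : 0 < d + x := by linarith
    set θ : ℝ := d / (d + x) with hθ
    have hθ0 : 0 ≤ θ := div_nonneg hd0 hdx.le
    have hθ1 : 0 ≤ 1 - θ := by
      have : θ ≤ 1 := by rw [hθ, div_le_one hdx]; linarith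
      linarith
    have hsum : θ + (1 - θ) = 1 := by ring
    have hcc := Real.concaveOn_rpow hp.le hp1
    have hm1 : τ - x ∈ Set.Ici (0:ℝ) := by simp; linarith
    have hm2 : K * x ∈ Set.Ici (0:ℝ) := by simp; nlinarith
    have h1 := hcc.2 hm1 hm2 hθ0 hθ1 hsum
    have h2 := hcc.2 hm1 hm2 hθ1 hθ0 (by ring)
    have e1 : θ • (τ - x) + (1 - θ) • (K * x) = τ := by
      rw [smul_eq_mul, smul_eq_mul, hθ]
      field_simp
      ring_nf
      rw [hd]; ring
    have e2 : (1 - θ) • (τ - x) + θ • (K * x) = (K - 1) * x := by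
      rw [smul_eq_mul, smul_eq_mul, hθ]
      field_simp
      ring_nf
      rw [hd]; ring
    rw [e1] at h1
    rw [e2] at h2
    rw [smul_eq_mul, smul_eq_mul] at h1 h2
    have eK : K ^ p * x ^ p = (K * x) ^ p := (Real.mul_rpow (by linarith) hx).symm
    have eK1 : (K - 1) ^ p * x ^ p = ((K - 1) * x) ^ p :=
      (Real.mul_rpow (by linarith) hx).symm
    rw [sub_mul, eK, eK1]
    linarith

section Steps
variable {p B C : ℝ} (hp : 0 < p) (hp1 : p ≤ 1) (hB0 : 0 ≤ B) (hBC : B ≤ C)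
  (hB : 1 ≤ B * ((2:ℝ) ^ p - 1)) (hC : 1 ≤ C * ((3:ℝ) ^ p - (2:ℝ) ^ p))

include hp hB0 hBC hB in
private lemma step_B1 {x τ' τ : ℝ} (hx : 0 ≤ x) (hτ' : 0 ≤ τ') (hττ' : τ' ≤ τ) :
    x ^ p + ((B + C) * τ' ^ p - B * (2 * x) ^ p) ≤ (B + C) * τ ^ p - B * x ^ p := by
  have e2 : (2 * x) ^ p = (2:ℝ) ^ p * x ^ p := Real.mul_rpow (by norm_num) hx
  have hmono : τ' ^ p ≤ τ ^ p := Real.rpow_le_rpow hτ' hττ' hp.le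
  have hxp := Real.rpow_nonneg hx p
  nlinarith [mul_le_mul_of_nonneg_left hmono (by linarith : (0:ℝ) ≤ B + C),
    mul_nonneg (by linarith : (0:ℝ) ≤ B * ((2:ℝ)^p - 1) - 1) hxp]

include hp hp1 hB0 hBC hC in
private lemma step_B2 {x τ : ℝ} (hx : 0 ≤ x) (h1 : x ≤ τ) (h2 : τ ≤ 3 * x) :
    x ^ p + ((B + C) * (τ - x) ^ p - B * (τ - x) ^ p) ≤ (B + C) * τ ^ p - B * x ^ p := by
  have hkey := key_concave hp hp1 hx (by norm_num : (1:ℝ) ≤ 3) h1 h2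
  norm_num at hkey
  have hxp := Real.rpow_nonneg hx p
  have hmono : x ^ p ≤ τ ^ p := Real.rpow_le_rpow hx h1 hp.le
  have hC0 : (0:ℝ) ≤ C := by linarith
  nlinarith [mul_le_mul_of_nonneg_left hkey hC0,
    mul_le_mul_of_nonneg_right hC hxp,
    mul_le_mul_of_nonneg_left hmono hB0]

include hp hp1 hB0 hBC hB in
private lemma step_C {l τ : ℝ} (hl : 0 ≤ l) (h1 : l ≤ τ) (h2 : τ ≤ 2 * l) :
    l ^ p + ((B + C) * (τ - l) ^ p - B * (τ - l) ^ p) ≤ (B + C) * τ ^ p - B * τ ^ p := by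
  have hkey := key_concave hp hp1 hl (by norm_num : (1:ℝ) ≤ 2) h1 h2
  norm_num [Real.one_rpow] at hkey
  have hlp := Real.rpow_nonneg hl p
  have hC0 : (0:ℝ) ≤ C := by linarith
  have hCkey : 1 ≤ C * ((2:ℝ) ^ p - 1) := by
    calc (1:ℝ) ≤ B * ((2:ℝ)^p - 1) := hB
    _ ≤ C * ((2:ℝ)^p - 1) := by
        apply mul_le_mul_of_nonneg_right hBC
        nlinarith [hB0]
  nlinarith [mul_le_mul_of_nonneg_left hkey hC0,
    mul_le_mul_of_nonneg_right hCkey hlp]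

end Steps

/- ---------------- numeric facts ---------------- -/

private lemma rpow_half_sq (t : ℝ) (ht : 0 ≤ t) : (t ^ ((1:ℝ)/2)) ^ (2:ℕ) = t := by
  rw [← Real.rpow_natCast (t ^ ((1:ℝ)/2)) 2, ← Real.rpow_mul ht]
  norm_num

private lemma rpow_tq_pow4 (t : ℝ) (ht : 0 ≤ t) : (t ^ ((3:ℝ)/4)) ^ (4:ℕ) = t ^ (3:ℕ) := by
  rw [← Real.rpow_natCast (t ^ ((3:ℝ)/4)) 4, ← Real.rpow_mul ht, ← Real.rpow_natCast t 3]
  norm_num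

private lemma sqrt2_lb : (4:ℝ)/3 ≤ (2:ℝ) ^ ((1:ℝ)/2) := by
  apply le_of_pow_le_pow_left₀ (n := 2) (by norm_num) (Real.rpow_nonneg (by norm_num) _)
  rw [rpow_half_sq 2 (by norm_num)]; norm_num

private lemma sqrt2_ub : (2:ℝ) ^ ((1:ℝ)/2) ≤ 3/2 := by
  apply le_of_pow_le_pow_left₀ (n := 2) (by norm_num) (by norm_num)
  rw [rpow_half_sq 2 (by norm_num)]; norm_num

private lemma sqrt3_lb : (17:ℝ)/10 ≤ (3:ℝ) ^ ((1:ℝ)/2) := by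
  apply le_of_pow_le_pow_left₀ (n := 2) (by norm_num) (Real.rpow_nonneg (by norm_num) _)
  rw [rpow_half_sq 3 (by norm_num)]; norm_num

private lemma tq2_lb : (3:ℝ)/2 ≤ (2:ℝ) ^ ((3:ℝ)/4) := by
  apply le_of_pow_le_pow_left₀ (n := 4) (by norm_num) (Real.rpow_nonneg (by norm_num) _)
  rw [rpow_tq_pow4 2 (by norm_num)]; norm_num

private lemma tq2_ub : (2:ℝ) ^ ((3:ℝ)/4) ≤ 17/10 := by
  apply le_of_pow_le_pow_left₀ (n := 4) (by norm_num) (by norm_num)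
  rw [rpow_tq_pow4 2 (by norm_num)]; norm_num

private lemma tq3_lb : (39:ℝ)/20 ≤ (3:ℝ) ^ ((3:ℝ)/4) := by
  apply le_of_pow_le_pow_left₀ (n := 4) (by norm_num) (Real.rpow_nonneg (by norm_num) _)
  rw [rpow_tq_pow4 3 (by norm_num)]; norm_num

private lemma hB_half : 1 ≤ 3*((2:ℝ) ^ ((1:ℝ)/2) - 1) := by have := sqrt2_lb; linarith
private lemma hC_half : 1 ≤ 5*((3:ℝ) ^ ((1:ℝ)/2) - (2:ℝ) ^ ((1:ℝ)/2)) := by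
  have := sqrt3_lb; have := sqrt2_ub; linarith
private lemma hB_tq : 1 ≤ 2*((2:ℝ) ^ ((3:ℝ)/4) - 1) := by have := tq2_lb; linarith
private lemma hC_tq : 1 ≤ 4*((3:ℝ) ^ ((3:ℝ)/4) - (2:ℝ) ^ ((3:ℝ)/4)) := by
  have := tq3_lb; have := tq2_ub; linarith

/- specialized step wrappers -/

private lemma sB1h {x τ' τ : ℝ} (hx : 0 ≤ x) (hτ' : 0 ≤ τ') (hττ' : τ' ≤ τ) :
    x ^ ((1:ℝ)/2) + (8 * τ' ^ ((1:ℝ)/2) - 3 * (2*x) ^ ((1:ℝ)/2))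
      ≤ 8 * τ ^ ((1:ℝ)/2) - 3 * x ^ ((1:ℝ)/2) := by
  have h := step_B1 (p := (1:ℝ)/2) (B := 3) (C := 5) (by norm_num) (by norm_num)
    (by norm_num) hB_half hx hτ' hττ'
  linarith

private lemma sB1t {x τ' τ : ℝ} (hx : 0 ≤ x) (hτ' : 0 ≤ τ') (hττ' : τ' ≤ τ) :
    x ^ ((3:ℝ)/4) + (6 * τ' ^ ((3:ℝ)/4) - 2 * (2*x) ^ ((3:ℝ)/4))
      ≤ 6 * τ ^ ((3:ℝ)/4) - 2 * x ^ ((3:ℝ)/4) := by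
  have h := step_B1 (p := (3:ℝ)/4) (B := 2) (C := 4) (by norm_num) (by norm_num)
    (by norm_num) hB_tq hx hτ' hττ'
  linarith

private lemma sB2h {x τ : ℝ} (hx : 0 ≤ x) (h1 : x ≤ τ) (h2 : τ ≤ 3*x) :
    x ^ ((1:ℝ)/2) + (8 * (τ-x) ^ ((1:ℝ)/2) - 3 * (τ-x) ^ ((1:ℝ)/2))
      ≤ 8 * τ ^ ((1:ℝ)/2) - 3 * x ^ ((1:ℝ)/2) := by
  have h := step_B2 (p := (1:ℝ)/2) (B := 3) (C := 5) (by norm_num) (by norm_num)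
    (by norm_num) (by norm_num) hC_half hx h1 h2
  linarith

private lemma sB2t {x τ : ℝ} (hx : 0 ≤ x) (h1 : x ≤ τ) (h2 : τ ≤ 3*x) :
    x ^ ((3:ℝ)/4) + (6 * (τ-x) ^ ((3:ℝ)/4) - 2 * (τ-x) ^ ((3:ℝ)/4))
      ≤ 6 * τ ^ ((3:ℝ)/4) - 2 * x ^ ((3:ℝ)/4) := by
  have h := step_B2 (p := (3:ℝ)/4) (B := 2) (C := 4) (by norm_num) (by norm_num)
    (by norm_num) (by norm_num) hC_tq hx h1 h2
  linarith

private lemma sCh {l τ : ℝ} (hl : 0 ≤ l) (h1 : l ≤ τ) (h2 : τ ≤ 2*l) :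
    l ^ ((1:ℝ)/2) + (8 * (τ-l) ^ ((1:ℝ)/2) - 3 * (τ-l) ^ ((1:ℝ)/2))
      ≤ 8 * τ ^ ((1:ℝ)/2) - 3 * τ ^ ((1:ℝ)/2) := by
  have h := step_C (p := (1:ℝ)/2) (B := 3) (C := 5) (by norm_num) (by norm_num)
    (by norm_num) (by norm_num) hB_half hl h1 h2
  linarith

private lemma sCt {l τ : ℝ} (hl : 0 ≤ l) (h1 : l ≤ τ) (h2 : τ ≤ 2*l) :
    l ^ ((3:ℝ)/4) + (6 * (τ-l) ^ ((3:ℝ)/4) - 2 * (τ-l) ^ ((3:ℝ)/4))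
      ≤ 6 * τ ^ ((3:ℝ)/4) - 2 * τ ^ ((3:ℝ)/4) := by
  have h := step_C (p := (3:ℝ)/4) (B := 2) (C := 4) (by norm_num) (by norm_num)
    (by norm_num) (by norm_num) hB_tq hl h1 h2
  linarith

/- glue -/
private lemma glue {a b u1 v1 w1 u2 v2 w2 RJ RI' RI : ℝ} (ha : 0 ≤ a) (hb : 0 ≤ b)
    (hR : RI ≤ RJ + RI') (hJ : RJ ≤ a*u1 + b*u2) (hI' : RI' ≤ a*v1 + b*v2)
    (h1 : u1 + v1 ≤ w1) (h2 : u2 + v2 ≤ w2) : RI ≤ a*w1 + b*w2 := by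
  nlinarith [mul_le_mul_of_nonneg_left h1 ha, mul_le_mul_of_nonneg_left h2 hb]

/- ---------------- the bound expression ---------------- -/

noncomputable def Bnd (a b : ℝ) (τ m : ℕ) : ℝ :=
  a * (8 * (τ:ℝ) ^ ((1:ℝ)/2) - 3 * (m:ℝ) ^ ((1:ℝ)/2)) +
  b * (6 * (τ:ℝ) ^ ((3:ℝ)/4) - 2 * (m:ℝ) ^ ((3:ℝ)/4))

private lemma Bnd_mono {a b : ℝ} (ha : 0 ≤ a) (hb : 0 ≤ b) (τ : ℕ) {m m' : ℕ}
    (h : m ≤ m') : Bnd a b τ m' ≤ Bnd a b τ m := by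
  unfold Bnd
  have h1 : ((m:ℝ)) ^ ((1:ℝ)/2) ≤ ((m':ℝ)) ^ ((1:ℝ)/2) :=
    Real.rpow_le_rpow (by positivity) (by exact_mod_cast h) (by norm_num)
  have h2 : ((m:ℝ)) ^ ((3:ℝ)/4) ≤ ((m':ℝ)) ^ ((3:ℝ)/4) :=
    Real.rpow_le_rpow (by positivity) (by exact_mod_cast h) (by norm_num)
  nlinarith [mul_le_mul_of_nonneg_left h1 ha, mul_le_mul_of_nonneg_left h2 hb]

/- ---------------- main induction : the work step ---------------- -/

section Main

variable (R : Finset ℕ → ℝ) (a b : ℝ) (ha : 0 ≤ a) (hb : 0 ≤ b)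
  (hsub : ∀ A B : Finset ℕ, Disjoint A B → R (A ∪ B) ≤ R A + R B)
  (hGC : ∀ J ∈ GCIntervals,
      R J ≤ a * (J.card : ℝ) ^ ((1 : ℝ) / 2) + b * (J.card : ℝ) ^ ((3 : ℝ) / 4))

include ha hb hsub hGC in
private lemma work (τ : ℕ)
    (IHτ : ∀ τ' < τ, ∀ s v : ℕ, 1 ≤ s → 1 ≤ τ' → 2^v ∣ s →
      R (Finset.Icc s (s + τ' - 1)) ≤ Bnd a b τ' (min (2^v) τ'))
    (s v : ℕ) (hs : 1 ≤ s) (hτ : 1 ≤ τ) (hd : 2^v ∣ s)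
    (hnd : 2^v ≤ τ → ¬ 2^(v+1) ∣ s) :
    R (Finset.Icc s (s + τ - 1)) ≤ Bnd a b τ (min (2^v) τ) := by
  have hx1 : 1 ≤ 2^v := Nat.one_le_two_pow
  have mkGC : ∀ k : ℕ, 2^k ∣ s → Finset.Icc s (s + 2^k - 1) ∈ GCIntervals := by
    intro k hk
    refine ⟨k, s / 2^k, ?_⟩
    have hse : s / 2^k * 2^k = s := Nat.div_mul_cancel hk
    have hse2 : (s / 2^k + 1) * 2^k = s + 2^k := by rw [add_mul, hse, one_mul]
    have h1 : 1 ≤ 2^k := Nat.one_le_two_pow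
    congr 1
    · omega
    · omega
  have cardIcc : ∀ l : ℕ, 1 ≤ l → (Finset.Icc s (s + l - 1)).card = l := by
    intro l hl; rw [Nat.card_Icc]; omega
  have single : ∀ k : ℕ, 2^k ∣ s → 2^k = τ →
      R (Finset.Icc s (s + τ - 1)) ≤
        a * (τ:ℝ) ^ ((1:ℝ)/2) + b * (τ:ℝ) ^ ((3:ℝ)/4) := by
    intro k hk hkτ
    have hJ := hGC _ (mkGC k hk)
    rw [cardIcc (2^k) Nat.one_le_two_pow, hkτ] at hJ
    exact hJ
  by_cases hxτ : 2^v ≤ τ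
  · -- increasing phase
    have hnd2 : ¬ 2^(v+1) ∣ s := hnd hxτ
    rcases eq_or_lt_of_le hxτ with heq | hlt
    · -- τ = 2^v : single piece
      have hJ := single v hd heq
      rw [min_eq_left hxτ]
      unfold Bnd
      have p1 : (0:ℝ) ≤ (τ:ℝ) ^ ((1:ℝ)/2) := by positivity
      have p2 : (0:ℝ) ≤ (τ:ℝ) ^ ((3:ℝ)/4) := by positivity
      have q1 : ((2^v : ℕ):ℝ) ^ ((1:ℝ)/2) ≤ (τ:ℝ) ^ ((1:ℝ)/2) := by
        apply Real.rpow_le_rpow (by positivity) (by exact_mod_cast hxτ) (by norm_num)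
      have q2 : ((2^v : ℕ):ℝ) ^ ((3:ℝ)/4) ≤ (τ:ℝ) ^ ((3:ℝ)/4) := by
        apply Real.rpow_le_rpow (by positivity) (by exact_mod_cast hxτ) (by norm_num)
      nlinarith [mul_le_mul_of_nonneg_left q1 ha, mul_le_mul_of_nonneg_left q2 hb,
        mul_nonneg ha p1, mul_nonneg hb p2]
    · -- 2^v < τ : split
      have hJ := hGC _ (mkGC v hd)
      rw [cardIcc (2^v) hx1] at hJ
      have hdecomp : Finset.Icc s (s + τ - 1) =
          Finset.Icc s (s + 2^v - 1) ∪ Finset.Icc (s + 2^v) (s + τ - 1) := by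
        ext t; simp only [Finset.mem_Icc, Finset.mem_union]; omega
      have hdisj : Disjoint (Finset.Icc s (s + 2^v - 1))
          (Finset.Icc (s + 2^v) (s + τ - 1)) := by
        rw [Finset.disjoint_left]
        intro t ht ht'
        simp only [Finset.mem_Icc] at ht ht'
        omega
      have hsplit := hsub _ _ hdisj
      rw [← hdecomp] at hsplit
      have hd' : 2^(v+1) ∣ s + 2^v := by
        obtain ⟨u, hu⟩ := hd
        have hodd : u % 2 = 1 := by
          rcases Nat.even_or_odd u with he | ho
          · exfalso; apply hnd2
            obtain ⟨w, hw⟩ := he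
            exact ⟨w, by rw [hu, hw, pow_succ]; ring⟩
          · exact Nat.odd_iff.mp ho
        obtain ⟨w, hw⟩ : 2 ∣ (u + 1) := by omega
        refine ⟨w, ?_⟩
        have h1 : s + 2^v = 2^v * (u + 1) := by rw [hu]; ring
        rw [h1, hw, pow_succ]; ring
      have hτ'1 : 1 ≤ τ - 2^v := by omega
      have hI' := IHτ (τ - 2^v) (by omega) (s + 2^v) (v+1) (by omega) hτ'1 hd'
      have heq2 : s + 2^v + (τ - 2^v) - 1 = s + τ - 1 := by omega
      rw [heq2] at hI'
      have h2v1 : (2:ℕ)^(v+1) = 2*2^v := by rw [pow_succ]; ring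
      rw [min_eq_left hxτ]
      by_cases hcase : 2*2^v ≤ τ - 2^v
      · -- still increasing
        rw [h2v1, min_eq_left hcase] at hI'
        unfold Bnd at hI' ⊢
        refine glue ha hb hsplit hJ hI' ?_ ?_
        · have := sB1h (x := ((2^v : ℕ):ℝ)) (τ' := ((τ - 2^v : ℕ):ℝ)) (τ := (τ:ℝ))
            (by positivity) (by positivity) (by exact_mod_cast Nat.sub_le τ (2^v))
          push_cast at this ⊢
          convert this using 3
        · have := sB1t (x := ((2^v : ℕ):ℝ)) (τ' := ((τ - 2^v : ℕ):ℝ)) (τ := (τ:ℝ))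
            (by positivity) (by positivity) (by exact_mod_cast Nat.sub_le τ (2^v))
          push_cast at this ⊢
          convert this using 3
      · -- entering decreasing phase
        rw [h2v1, min_eq_right (by omega : τ - 2^v ≤ 2*2^v)] at hI'
        unfold Bnd at hI' ⊢
        have hcast : ((τ - 2^v : ℕ):ℝ) = (τ:ℝ) - ((2^v : ℕ):ℝ) := by
          push_cast [Nat.cast_sub (le_of_lt hlt)]; ring
        rw [hcast] at hI'
        have c1 : ((2^v:ℕ):ℝ) ≤ (τ:ℝ) := by exact_mod_cast le_of_lt hlt
        have c2 : (τ:ℝ) ≤ 3 * ((2^v:ℕ):ℝ) := by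
          have h3 : τ ≤ 3 * 2^v := by omega
          exact_mod_cast h3
        refine glue ha hb hsplit hJ hI' ?_ ?_
        · exact sB2h (by positivity) c1 c2
        · exact sB2t (by positivity) c1 c2
  · -- decreasing phase : τ < 2^v
    push_neg at hxτ
    obtain ⟨K, hlτ, hτl, hKdvd⟩ : ∃ K, 2^K ≤ τ ∧ τ < 2*2^K ∧ 2^K ∣ s := by
      refine ⟨Nat.log 2 τ, Nat.pow_log_le_self 2 (by omega), ?_, ?_⟩
      · have := Nat.lt_pow_succ_log_self (by norm_num : 1 < 2) τ
        rw [pow_succ] at this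
        omega
      · have hKv : Nat.log 2 τ < v := by
          have h1 : (2:ℕ)^(Nat.log 2 τ) < 2^v :=
            lt_of_le_of_lt (Nat.pow_log_le_self 2 (by omega)) hxτ
          exact (Nat.pow_lt_pow_iff_right (by norm_num)).mp h1
        exact dvd_trans (pow_dvd_pow 2 (le_of_lt hKv)) hd
    have hl1 : 1 ≤ 2^K := Nat.one_le_two_pow
    rw [min_eq_right (le_of_lt hxτ)]
    rcases eq_or_lt_of_le hlτ with heq | hlt
    · -- τ = 2^K : single piece
      have hJ := single K hKdvd heq
      unfold Bnd
      have p1 : (0:ℝ) ≤ (τ:ℝ) ^ ((1:ℝ)/2) := by positivity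
      have p2 : (0:ℝ) ≤ (τ:ℝ) ^ ((3:ℝ)/4) := by positivity
      nlinarith [mul_nonneg ha p1, mul_nonneg hb p2]
    · -- 2^K < τ : split
      have hJ := hGC _ (mkGC K hKdvd)
      rw [cardIcc (2^K) hl1] at hJ
      have hdecomp : Finset.Icc s (s + τ - 1) =
          Finset.Icc s (s + 2^K - 1) ∪ Finset.Icc (s + 2^K) (s + τ - 1) := by
        ext t; simp only [Finset.mem_Icc, Finset.mem_union]; omega
      have hdisj : Disjoint (Finset.Icc s (s + 2^K - 1))
          (Finset.Icc (s + 2^K) (s + τ - 1)) := by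
        rw [Finset.disjoint_left]
        intro t ht ht'
        simp only [Finset.mem_Icc] at ht ht'
        omega
      have hsplit := hsub _ _ hdisj
      rw [← hdecomp] at hsplit
      have hd' : 2^K ∣ s + 2^K := dvd_add hKdvd dvd_rfl
      have hτ'1 : 1 ≤ τ - 2^K := by omega
      have hI' := IHτ (τ - 2^K) (by omega) (s + 2^K) K (by omega) hτ'1 hd'
      have heq2 : s + 2^K + (τ - 2^K) - 1 = s + τ - 1 := by omega
      rw [heq2] at hI'
      rw [min_eq_right (by omega : τ - 2^K ≤ 2^K)] at hI'
      unfold Bnd at hI' ⊢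
      have hcast : ((τ - 2^K : ℕ):ℝ) = (τ:ℝ) - ((2^K : ℕ):ℝ) := by
        push_cast [Nat.cast_sub hlτ]; ring
      rw [hcast] at hI'
      have c1 : ((2^K:ℕ):ℝ) ≤ (τ:ℝ) := by exact_mod_cast hlτ
      have c2 : (τ:ℝ) ≤ 2 * ((2^K:ℕ):ℝ) := by
        have h3 : τ ≤ 2 * 2^K := by omega
        exact_mod_cast h3
      refine glue ha hb hsplit hJ hI' ?_ ?_
      · exact sCh (by positivity) c1 c2
      · exact sCt (by positivity) c1 c2

include ha hb hsub hGC in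
private lemma main_ind :
    ∀ τ s v : ℕ, 1 ≤ s → 1 ≤ τ → 2^v ∣ s →
      R (Finset.Icc s (s + τ - 1)) ≤ Bnd a b τ (min (2^v) τ) := by
  intro τ
  induction τ using Nat.strong_induction_on with
  | _ τ IHτ =>
    suffices H : ∀ n s v : ℕ, s ≤ 2^v + n → 1 ≤ s → 1 ≤ τ → 2^v ∣ s →
        R (Finset.Icc s (s + τ - 1)) ≤ Bnd a b τ (min (2^v) τ) by
      intro s v hs hτ' hd
      exact H s s v (by omega) hs hτ' hd
    intro n
    induction n with
    | zero =>
      intro s v hle hs hτ' hd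
      have hsv : s = 2^v := le_antisymm (by omega) (Nat.le_of_dvd (by omega) hd)
      refine work R a b ha hb hsub hGC τ IHτ s v hs hτ' hd ?_
      intro _ hdd
      have h1 := Nat.le_of_dvd (by omega) hdd
      have h2 : (2:ℕ)^v < 2^(v+1) := by
        rw [pow_succ]
        have : 1 ≤ 2^v := Nat.one_le_two_pow
        omega
      omega
    | succ n IHn =>
      intro s v hle hs hτ' hd
      by_cases hd2 : 2^(v+1) ∣ s
      · have h2v : (1:ℕ) ≤ 2^v := Nat.one_le_two_pow
        have hsle : 2^(v+1) ≤ s := Nat.le_of_dvd (by omega) hd2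
        have hps : (2:ℕ)^(v+1) = 2*2^v := by rw [pow_succ]; ring
        have hb' := IHn s (v+1) (by omega) hs hτ' hd2
        refine le_trans hb' (Bnd_mono ha hb τ ?_)
        refine min_le_min ?_ le_rfl
        omega
      · exact work R a b ha hb hsub hGC τ IHτ s v hs hτ' hd (fun _ => hd2)

end Main

/-- If the regret over every geometric covering interval `J` is at most
`a·|J|^{1/2} + b·|J|^{3/4}`, then the regret over any interval `[s, s+τ-1] ⊆ [T]`
is at most `8a·τ^{1/2} + 6b·τ^{3/4}`. -/
theorem strongly_adaptive_regret_from_covering (R : Finset ℕ → ℝ) (a b : ℝ)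
    (ha : 0 ≤ a) (hb : 0 ≤ b)
    (hsub : ∀ A B : Finset ℕ, Disjoint A B → R (A ∪ B) ≤ R A + R B)
    (hGC : ∀ J ∈ GCIntervals,
      R J ≤ a * (J.card : ℝ) ^ ((1 : ℝ) / 2) + b * (J.card : ℝ) ^ ((3 : ℝ) / 4))
    (T s τ : ℕ) (hs : 1 ≤ s) (hτ : 1 ≤ τ) (hT : s + τ - 1 ≤ T) :
    R (Finset.Icc s (s + τ - 1)) ≤
      8 * a * (τ : ℝ) ^ ((1 : ℝ) / 2) + 6 * b * (τ : ℝ) ^ ((3 : ℝ) / 4) := by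
  have h := main_ind R a b ha hb hsub hGC τ s 0 hs hτ (by simp)
  rw [pow_zero, min_eq_left hτ] at h
  unfold Bnd at h
  norm_num [Real.one_rpow] at h
  nlinarith [h, ha, hb]
end
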